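/- Let G = (V,E) be a finite simple graph with node weights w ∈ ℝ_+^V and edge weights satisfying w_{ij} ≥ max{w_i, w_j} for all edges ij ∈ E. Then the Handelman rank satisfies rk_H(G,w) ≤ |V(G)| − α(G) + 1, where α(G) is the (unweighted) stability number of G. -/

import Mathlib

open MvPolynomial Finset

noncomputable def handTerm {V : Type*} [DecidableEq V] (T I : Finset V) : MvPolynomial V ℝ :=
  (∏ i ∈ I, X i) * ∏ j ∈ T \ I, (1 - X j)

def InHandelman {V : Type*} [Fintype V] [DecidableEq V] (t : ℕ)
    (p : MvPolynomial V ℝ) : Prop :=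
  ∃ c : Finset V → Finset V → ℝ,
    (∀ T I, 0 ≤ c T I) ∧
    p = ∑ T ∈ Finset.univ.filter (fun T : Finset V => T.card ≤ t),
          ∑ I ∈ T.powerset, C (c T I) * handTerm T I

open Classical in
noncomputable def pGW {V : Type*} [Fintype V] (G : SimpleGraph V)
    (w : V → ℝ) (W : V → V → ℝ) : MvPolynomial V ℝ :=
  (∑ i, C (w i) * X i) -
    C (2⁻¹ : ℝ) * ∑ q ∈ Finset.univ.filter (fun q : V × V => G.Adj q.1 q.2),
      C (W q.1 q.2) * (X q.1 * X q.2)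

noncomputable def alphaW {V : Type*} (G : SimpleGraph V) (w : V → ℝ) : ℝ :=
  sSup {v : ℝ | ∃ S : Finset V, (∀ i ∈ S, ∀ j ∈ S, ¬ G.Adj i j) ∧ v = ∑ i ∈ S, w i}

-- The (unweighted) stability number `α(G)`: the maximum cardinality of a stable set.
open Classical in
noncomputable def alphaNat {V : Type*} [Fintype V] (G : SimpleGraph V) : ℕ :=
  Finset.sup
    (Finset.univ.filter fun S : Finset V => ∀ i ∈ S, ∀ j ∈ S, ¬ G.Adj i j)
    Finset.card

open Classical in
lemma alphaNat_exists {V : Type*} [Fintype V] (G : SimpleGraph V) :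
    ∃ S : Finset V, (∀ i ∈ S, ∀ j ∈ S, ¬ G.Adj i j) ∧ alphaNat G = S.card := by
  obtain ⟨S, hSmem, hScard⟩ := Finset.exists_mem_eq_sup
    (Finset.univ.filter fun S : Finset V => ∀ i ∈ S, ∀ j ∈ S, ¬ G.Adj i j)
    ⟨∅, by simp⟩ Finset.card
  refine ⟨S, (Finset.mem_filter.1 hSmem).2, ?_⟩
  unfold alphaNat
  exact hScard

/-! ### Auxiliary definitions -/

open Classical in
noncomputable def eAux {V : Type*} (G : SimpleGraph V) (W : V → V → ℝ) (i j : V) : ℝ :=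
  if G.Adj i j then W i j else 0

noncomputable def aAux {V : Type*} (G : SimpleGraph V) (w : V → ℝ) (W : V → V → ℝ)
    (I : Finset V) (j : V) : ℝ :=
  (∑ i ∈ I, eAux G W i j) - w j

noncomputable def mAux {V : Type*} [Fintype V] (G : SimpleGraph V) (w : V → ℝ)
    (W : V → V → ℝ) (S I : Finset V) : ℝ :=
  (alphaW G w - (∑ i ∈ I, w i) + 2⁻¹ * ∑ a ∈ I, ∑ b ∈ I, eAux G W a b)
    - ∑ j ∈ S, max (-(aAux G w W I j)) 0

section Lems
variable {V : Type*} [Fintype V] [DecidableEq V]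

/-! ### Closure properties of the Handelman set -/

lemma inHandelman_zero (t : ℕ) : InHandelman t (0 : MvPolynomial V ℝ) :=
  ⟨fun _ _ => 0, fun _ _ => le_refl 0, by simp⟩

lemma inHandelman_add {t : ℕ} {p q : MvPolynomial V ℝ} (hp : InHandelman t p)
    (hq : InHandelman t q) : InHandelman t (p + q) := by
  obtain ⟨c, hc, hcp⟩ := hp
  obtain ⟨d, hd, hdq⟩ := hq
  refine ⟨fun T I => c T I + d T I, fun T I => add_nonneg (hc T I) (hd T I), ?_⟩
  simp only [map_add, add_mul, Finset.sum_add_distrib, hcp, hdq]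

lemma inHandelman_sum {t : ℕ} {ι : Type*} (s : Finset ι) (f : ι → MvPolynomial V ℝ)
    (h : ∀ i ∈ s, InHandelman t (f i)) : InHandelman t (∑ i ∈ s, f i) :=
  Finset.sum_induction f _ (fun _ _ ha hb => inHandelman_add ha hb) (inHandelman_zero t) h

lemma inHandelman_single {t : ℕ} {T I : Finset V} (hIT : I ⊆ T) (hT : T.card ≤ t)
    {m : ℝ} (hm : 0 ≤ m) : InHandelman t (C m * handTerm T I) := by
  refine ⟨fun T' I' => if T' = T ∧ I' = I then m else 0,
    fun T' I' => by dsimp only; split <;> simp [hm], ?_⟩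
  rw [Finset.sum_eq_single_of_mem T (by simp [hT])]
  · rw [Finset.sum_eq_single_of_mem I (Finset.mem_powerset.2 hIT)]
    · simp
    · intro I' _ hne; simp [hne]
  · intro T' _ hne
    apply Finset.sum_eq_zero
    intro I' _
    simp [hne]

/-! ### Basic facts about `eAux` -/

omit [Fintype V] [DecidableEq V] in
lemma eAux_symm (G : SimpleGraph V) (W : V → V → ℝ) (hWs : ∀ i j, W i j = W j i) (i j : V) :
    eAux G W i j = eAux G W j i := by
  unfold eAux
  by_cases h : G.Adj i j
  · rw [if_pos h, if_pos h.symm, hWs]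
  · rw [if_neg h, if_neg (fun hh => h hh.symm)]

omit [Fintype V] [DecidableEq V] in
lemma eAux_self (G : SimpleGraph V) (W : V → V → ℝ) (a : V) : eAux G W a a = 0 := by
  unfold eAux
  rw [if_neg (G.loopless.irrefl a)]

omit [Fintype V] [DecidableEq V] in
lemma eAux_nonneg (G : SimpleGraph V) (w : V → ℝ) (W : V → V → ℝ) (hw : ∀ v, 0 ≤ w v)
    (hW : ∀ i j, G.Adj i j → max (w i) (w j) ≤ W i j) (i j : V) : 0 ≤ eAux G W i j := by
  unfold eAux
  by_cases h : G.Adj i j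
  · rw [if_pos h]
    exact le_trans (le_trans (hw i) (le_max_left _ _)) (hW i j h)
  · rw [if_neg h]

/-! ### Interpolation identities -/

omit [Fintype V] in
lemma sum_powerset_indicator (T D : Finset V) (hD : D ⊆ T) (x : V → ℝ) :
    ∑ I ∈ T.powerset, (∏ i ∈ I, x i) * (∏ j ∈ T \ I, (1 - x j)) * (if D ⊆ I then 1 else 0)
      = ∏ i ∈ D, x i := by
  have h := Finset.prod_add (fun i => x i) (fun j => (1 - x j) * (if j ∈ D then (0:ℝ) else 1)) T
  have hL : ∏ j ∈ T, (x j + (1 - x j) * (if j ∈ D then (0:ℝ) else 1)) = ∏ i ∈ D, x i := by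
    rw [← Finset.prod_sdiff hD]
    have h1 : ∏ j ∈ T \ D, (x j + (1 - x j) * (if j ∈ D then (0:ℝ) else 1)) = 1 := by
      apply Finset.prod_eq_one
      intro j hj
      rw [if_neg (Finset.mem_sdiff.1 hj).2]
      ring
    have h2 : ∏ j ∈ D, (x j + (1 - x j) * (if j ∈ D then (0:ℝ) else 1)) = ∏ i ∈ D, x i := by
      apply Finset.prod_congr rfl
      intro j hj
      rw [if_pos hj]
      ring
    rw [h1, h2, one_mul]
  rw [← hL, h]
  apply Finset.sum_congr rfl
  intro I hI
  rw [Finset.mem_powerset] at hI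
  rw [Finset.prod_mul_distrib]
  have : (∏ j ∈ T \ I, (if j ∈ D then (0:ℝ) else 1)) = (if D ⊆ I then 1 else 0) := by
    by_cases hDI : D ⊆ I
    · rw [if_pos hDI]
      apply Finset.prod_eq_one
      intro j hj
      rw [if_neg]
      intro hjD
      exact (Finset.mem_sdiff.1 hj).2 (hDI hjD)
    · rw [if_neg hDI]
      obtain ⟨d, hdD, hdI⟩ := Finset.not_subset.1 hDI
      exact Finset.prod_eq_zero (Finset.mem_sdiff.2 ⟨hD hdD, hdI⟩) (if_pos hdD)
  rw [this]
  ring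

omit [Fintype V] in
lemma expand_lemma (T : Finset V) (x : V → ℝ) (α' : ℝ) (β : V → ℝ) (γ : V → V → ℝ)
    (hγ : ∀ a, γ a a = 0) :
    ∑ I ∈ T.powerset, (∏ i ∈ I, x i) * (∏ j ∈ T \ I, (1 - x j)) *
      (α' + (∑ i ∈ T, if i ∈ I then β i else 0)
         + ∑ a ∈ T, ∑ b ∈ T, (if a ∈ I ∧ b ∈ I then γ a b else 0))
    = α' + (∑ i ∈ T, β i * x i) + ∑ a ∈ T, ∑ b ∈ T, γ a b * (x a * x b) := by
  simp only [mul_add, Finset.sum_add_distrib]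
  congr 1
  · congr 1
    · have h := sum_powerset_indicator T ∅ (Finset.empty_subset T) x
      simp only [Finset.empty_subset, if_true, Finset.prod_empty, mul_one] at h
      rw [← Finset.sum_mul, h, one_mul]
    · simp only [Finset.mul_sum]
      rw [Finset.sum_comm]
      apply Finset.sum_congr rfl
      intro i hi
      have h := sum_powerset_indicator T {i} (Finset.singleton_subset_iff.2 hi) x
      simp only [Finset.singleton_subset_iff, Finset.prod_singleton] at h
      rw [← h, Finset.mul_sum]
      apply Finset.sum_congr rfl
      intro I hI
      by_cases hiI : i ∈ I <;> simp [hiI] <;> ring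
  · simp only [Finset.mul_sum]
    rw [Finset.sum_comm]
    apply Finset.sum_congr rfl
    intro a ha
    rw [Finset.sum_comm]
    apply Finset.sum_congr rfl
    intro b hb
    by_cases hab : a = b
    · subst hab
      simp [hγ a]
    · have hsub : ({a, b} : Finset V) ⊆ T := by
        intro v hv
        rcases Finset.mem_insert.1 hv with h | h
        · subst h; exact ha
        · rw [Finset.mem_singleton.1 h]; exact hb
      have h := sum_powerset_indicator T {a, b} hsub x
      rw [Finset.prod_pair hab] at h
      rw [← h, Finset.mul_sum]
      apply Finset.sum_congr rfl
      intro I hI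
      have hiff : ({a, b} : Finset V) ⊆ I ↔ a ∈ I ∧ b ∈ I := by
        simp [Finset.insert_subset_iff]
      by_cases hc : a ∈ I ∧ b ∈ I
      · rw [if_pos hc, if_pos (hiff.2 hc)]; ring
      · rw [if_neg hc, if_neg (fun hh => hc (hiff.1 hh))]; ring

/-! ### The master identity -/

lemma master_identity (G : SimpleGraph V) (w : V → ℝ) (W : V → V → ℝ)
    (hWs : ∀ i j, W i j = W j i) (S : Finset V)
    (hS : ∀ i ∈ S, ∀ j ∈ S, ¬ G.Adj i j) (α : ℝ) (x : V → ℝ) :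
    α - ((∑ i, w i * x i) - 2⁻¹ * ∑ a, ∑ b, eAux G W a b * (x a * x b))
    = ∑ I ∈ (Finset.univ \ S).powerset,
        (∏ i ∈ I, x i) * (∏ j ∈ (Finset.univ \ S) \ I, (1 - x j)) *
        ((α - (∑ i ∈ I, w i) + 2⁻¹ * ∑ a ∈ I, ∑ b ∈ I, eAux G W a b)
          + ∑ j ∈ S, ((∑ i ∈ I, eAux G W i j) - w j) * x j) := by
  set T : Finset V := Finset.univ \ S with hT
  set e : V → V → ℝ := eAux G W with he
  have hstep : ∀ I ∈ T.powerset,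
      (∏ i ∈ I, x i) * (∏ j ∈ T \ I, (1 - x j)) *
        ((α - (∑ i ∈ I, w i) + 2⁻¹ * ∑ a ∈ I, ∑ b ∈ I, e a b)
          + ∑ j ∈ S, ((∑ i ∈ I, e i j) - w j) * x j)
      = (∏ i ∈ I, x i) * (∏ j ∈ T \ I, (1 - x j)) *
        ((α - ∑ j ∈ S, w j * x j)
          + (∑ i ∈ T, if i ∈ I then ((∑ j ∈ S, e i j * x j) - w i) else 0)
          + ∑ a ∈ T, ∑ b ∈ T, (if a ∈ I ∧ b ∈ I then 2⁻¹ * e a b else 0)) := by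
    intro I hI
    rw [Finset.mem_powerset] at hI
    congr 1
    have h1 : (∑ i ∈ T, if i ∈ I then ((∑ j ∈ S, e i j * x j) - w i) else 0)
        = ∑ i ∈ I, ((∑ j ∈ S, e i j * x j) - w i) := by
      rw [Finset.sum_ite_mem, Finset.inter_eq_right.2 hI]
    have h2 : (∑ a ∈ T, ∑ b ∈ T, (if a ∈ I ∧ b ∈ I then 2⁻¹ * e a b else 0))
        = 2⁻¹ * ∑ a ∈ I, ∑ b ∈ I, e a b := by
      rw [Finset.mul_sum]
      rw [show (∑ a ∈ T, ∑ b ∈ T, (if a ∈ I ∧ b ∈ I then 2⁻¹ * e a b else 0))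
          = ∑ a ∈ T, (if a ∈ I then ∑ b ∈ T, (if b ∈ I then 2⁻¹ * e a b else 0) else 0) by
        apply Finset.sum_congr rfl; intro a _
        by_cases haI : a ∈ I
        · simp [haI]
        · simp [haI]]
      rw [Finset.sum_ite_mem, Finset.inter_eq_right.2 hI]
      apply Finset.sum_congr rfl
      intro a _
      rw [Finset.sum_ite_mem, Finset.inter_eq_right.2 hI, Finset.mul_sum]
    rw [h1, h2]
    have h3 : ∑ i ∈ I, ((∑ j ∈ S, e i j * x j) - w i)
        = (∑ i ∈ I, ∑ j ∈ S, e i j * x j) - ∑ i ∈ I, w i := Finset.sum_sub_distrib _ _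
    have h4 : ∑ j ∈ S, ((∑ i ∈ I, e i j) - w j) * x j
        = (∑ i ∈ I, ∑ j ∈ S, e i j * x j) - ∑ j ∈ S, w j * x j := by
      rw [Finset.sum_comm]
      rw [← Finset.sum_sub_distrib]
      apply Finset.sum_congr rfl
      intro j _
      rw [sub_mul, Finset.sum_mul]
    rw [h3, h4]
    ring
  rw [Finset.sum_congr rfl hstep, expand_lemma T x _ _ _ (fun a => by simp [he, eAux_self])]
  have hsplit : ∀ f : V → ℝ, (∑ i, f i) = (∑ i ∈ T, f i) + ∑ i ∈ S, f i :=
    fun f => (Finset.sum_sdiff (Finset.subset_univ S)).symm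
  have hdouble : (∑ a, ∑ b, e a b * (x a * x b))
      = (∑ a ∈ T, ∑ b ∈ T, e a b * (x a * x b))
        + (∑ a ∈ T, ∑ b ∈ S, e a b * (x a * x b))
        + ((∑ a ∈ S, ∑ b ∈ T, e a b * (x a * x b))
        + ∑ a ∈ S, ∑ b ∈ S, e a b * (x a * x b)) := by
    rw [hsplit (fun a => ∑ b, e a b * (x a * x b))]
    congr 1
    · rw [← Finset.sum_add_distrib]
      apply Finset.sum_congr rfl
      intro a _
      exact hsplit _
    · rw [← Finset.sum_add_distrib]
      apply Finset.sum_congr rfl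
      intro a _
      exact hsplit _
  have hSS : (∑ a ∈ S, ∑ b ∈ S, e a b * (x a * x b)) = 0 := by
    apply Finset.sum_eq_zero
    intro a ha
    apply Finset.sum_eq_zero
    intro b hb
    rw [he]
    unfold eAux
    rw [if_neg (hS a ha b hb), zero_mul]
  have hcross : (∑ a ∈ S, ∑ b ∈ T, e a b * (x a * x b))
      = ∑ a ∈ T, ∑ b ∈ S, e a b * (x a * x b) := by
    rw [Finset.sum_comm]
    apply Finset.sum_congr rfl
    intro a _
    apply Finset.sum_congr rfl
    intro b _
    rw [he, eAux_symm G W hWs]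
    ring
  have hlin : (∑ i ∈ T, ((∑ j ∈ S, e i j * x j) - w i) * x i)
      = (∑ a ∈ T, ∑ b ∈ S, e a b * (x a * x b)) - ∑ i ∈ T, w i * x i := by
    rw [← Finset.sum_sub_distrib]
    apply Finset.sum_congr rfl
    intro i _
    rw [sub_mul, Finset.sum_mul]
    congr 1
    apply Finset.sum_congr rfl
    intro j _
    ring
  have hhalf : (∑ a ∈ T, ∑ b ∈ T, 2⁻¹ * e a b * (x a * x b))
      = 2⁻¹ * ∑ a ∈ T, ∑ b ∈ T, e a b * (x a * x b) := by
    rw [Finset.mul_sum]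
    apply Finset.sum_congr rfl
    intro a _
    rw [Finset.mul_sum]
    apply Finset.sum_congr rfl
    intro b _
    ring
  rw [hsplit (fun i => w i * x i), hdouble, hSS, hcross, hlin, hhalf]
  ring

/-! ### Bounds via `alphaW` -/

lemma stable_sum_le (G : SimpleGraph V) (w : V → ℝ) (B : Finset V)
    (hB : ∀ i ∈ B, ∀ j ∈ B, ¬ G.Adj i j) : ∑ i ∈ B, w i ≤ alphaW G w := by
  apply le_csSup
  · have hsub : {v : ℝ | ∃ S : Finset V, (∀ i ∈ S, ∀ j ∈ S, ¬ G.Adj i j) ∧ v = ∑ i ∈ S, w i}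
        ⊆ Set.range (fun s : Finset V => ∑ i ∈ s, w i) := by
      rintro v ⟨s, _, hv⟩
      exact ⟨s, hv.symm⟩
    exact ((Set.finite_range _).subset hsub).bddAbove
  · exact ⟨B, hB, rfl⟩

lemma pv_le (G : SimpleGraph V) (w : V → ℝ) (W : V → V → ℝ) (hw : ∀ v, 0 ≤ w v)
    (hWs : ∀ i j, W i j = W j i) (hW : ∀ i j, G.Adj i j → max (w i) (w j) ≤ W i j)
    (A : Finset V) :
    (∑ i ∈ A, w i) - 2⁻¹ * (∑ a ∈ A, ∑ b ∈ A, eAux G W a b) ≤ alphaW G w := by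
  induction A using Finset.strongInduction with
  | _ A ih =>
    by_cases hst : ∀ i ∈ A, ∀ j ∈ A, ¬ G.Adj i j
    · have hz : (∑ a ∈ A, ∑ b ∈ A, eAux G W a b) = 0 := by
        apply Finset.sum_eq_zero
        intro a ha
        apply Finset.sum_eq_zero
        intro b hb
        unfold eAux
        rw [if_neg (hst a ha b hb)]
      rw [hz, mul_zero, sub_zero]
      exact stable_sum_le G w A hst
    · push_neg at hst
      obtain ⟨i, hiA, j, hjA, hadj⟩ := hst
      have hji : j ∈ A.erase i := Finset.mem_erase.2 ⟨fun h => G.loopless.irrefl i (h ▸ hadj), hjA⟩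
      set A' := A.erase i with hA'
      have hsum : (∑ a ∈ A, ∑ b ∈ A, eAux G W a b)
          = 2 * (∑ b ∈ A', eAux G W i b) + ∑ a ∈ A', ∑ b ∈ A', eAux G W a b := by
        rw [← Finset.add_sum_erase _ _ hiA, ← hA']
        rw [← Finset.add_sum_erase _ (fun b => eAux G W i b) hiA, ← hA']
        have hii : eAux G W i i = 0 := eAux_self G W i
        have hinner : ∀ a ∈ A', (∑ b ∈ A, eAux G W a b)
            = eAux G W i a + ∑ b ∈ A', eAux G W a b := by
          intro a _
          rw [← Finset.add_sum_erase _ (fun b => eAux G W a b) hiA, ← hA']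
          congr 1
          exact eAux_symm G W hWs a i
        rw [Finset.sum_congr rfl hinner, Finset.sum_add_distrib, hii]
        ring
      have hwsum : (∑ a ∈ A, w a) = w i + ∑ a ∈ A', w a := (Finset.add_sum_erase _ _ hiA).symm
      have hle : (∑ i ∈ A, w i) - 2⁻¹ * (∑ a ∈ A, ∑ b ∈ A, eAux G W a b)
          ≤ (∑ i ∈ A', w i) - 2⁻¹ * (∑ a ∈ A', ∑ b ∈ A', eAux G W a b) := by
        rw [hsum, hwsum]
        have h1 : eAux G W i j ≤ ∑ b ∈ A', eAux G W i b :=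
          Finset.single_le_sum (fun b _ => eAux_nonneg G w W hw hW i b) hji
        have h2 : w i ≤ eAux G W i j := by
          unfold eAux
          rw [if_pos hadj]
          exact le_trans (le_max_left _ _) (hW i j hadj)
        nlinarith [le_trans h2 h1]
      exact le_trans hle (ih A' (Finset.erase_ssubset hiA))

lemma m_nonneg (G : SimpleGraph V) (w : V → ℝ) (W : V → V → ℝ) (hw : ∀ v, 0 ≤ w v)
    (hWs : ∀ i j, W i j = W j i) (hW : ∀ i j, G.Adj i j → max (w i) (w j) ≤ W i j)
    (S : Finset V) (hS : ∀ i ∈ S, ∀ j ∈ S, ¬ G.Adj i j)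
    (I : Finset V) (hI : I ⊆ Finset.univ \ S) :
    0 ≤ mAux G w W S I := by
  classical
  unfold mAux aAux
  set J := S.filter (fun j => (∑ i ∈ I, eAux G W i j) - w j < 0) with hJ
  have hJS : J ⊆ S := Finset.filter_subset _ _
  have hdisj : Disjoint I J := by
    rw [Finset.disjoint_left]
    intro x hxI hxJ
    exact (Finset.mem_sdiff.1 (hI hxI)).2 (hJS hxJ)
  have hPv := pv_le G w W hw hWs hW (I ∪ J)
  have h1 : (∑ i ∈ I ∪ J, w i) = (∑ i ∈ I, w i) + ∑ j ∈ J, w j := Finset.sum_union hdisj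
  have hJJ : (∑ a ∈ J, ∑ b ∈ J, eAux G W a b) = 0 := by
    apply Finset.sum_eq_zero; intro a ha
    apply Finset.sum_eq_zero; intro b hb
    unfold eAux
    rw [if_neg (hS a (hJS ha) b (hJS hb))]
  have h2 : (∑ a ∈ I ∪ J, ∑ b ∈ I ∪ J, eAux G W a b)
      = (∑ a ∈ I, ∑ b ∈ I, eAux G W a b) + 2 * ∑ j ∈ J, ∑ i ∈ I, eAux G W i j := by
    rw [Finset.sum_union hdisj]
    have hIin : (∑ a ∈ I, ∑ b ∈ I ∪ J, eAux G W a b)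
        = (∑ a ∈ I, ∑ b ∈ I, eAux G W a b) + ∑ a ∈ I, ∑ b ∈ J, eAux G W a b := by
      rw [← Finset.sum_add_distrib]
      exact Finset.sum_congr rfl fun a _ => Finset.sum_union hdisj
    have hJin : (∑ a ∈ J, ∑ b ∈ I ∪ J, eAux G W a b)
        = (∑ a ∈ J, ∑ b ∈ I, eAux G W a b) + ∑ a ∈ J, ∑ b ∈ J, eAux G W a b := by
      rw [← Finset.sum_add_distrib]
      exact Finset.sum_congr rfl fun a _ => Finset.sum_union hdisj
    have hflip : (∑ a ∈ I, ∑ b ∈ J, eAux G W a b) = ∑ j ∈ J, ∑ i ∈ I, eAux G W i j :=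
      Finset.sum_comm
    have hflip2 : (∑ a ∈ J, ∑ b ∈ I, eAux G W a b) = ∑ j ∈ J, ∑ i ∈ I, eAux G W i j := by
      apply Finset.sum_congr rfl
      intro a _
      exact Finset.sum_congr rfl fun b _ => eAux_symm G W hWs a b
    rw [hIin, hJin, hflip, hflip2, hJJ]
    ring
  have h3 : (∑ j ∈ S, max (-((∑ i ∈ I, eAux G W i j) - w j)) 0)
      = ∑ j ∈ J, (w j - ∑ i ∈ I, eAux G W i j) := by
    rw [hJ, Finset.sum_filter]
    apply Finset.sum_congr rfl
    intro j _
    by_cases h : (∑ i ∈ I, eAux G W i j) - w j < 0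
    · rw [if_pos h, max_eq_left (by linarith)]
      ring
    · rw [if_neg h, max_eq_right (by push_neg at h; linarith)]
  have h4 : (∑ j ∈ J, (w j - ∑ i ∈ I, eAux G W i j))
      = (∑ j ∈ J, w j) - ∑ j ∈ J, ∑ i ∈ I, eAux G W i j := Finset.sum_sub_distrib _ _
  rw [h1, h2] at hPv
  rw [h3, h4]
  linarith

/-! ### The certificate identity -/

lemma cert_identity (G : SimpleGraph V) (w : V → ℝ) (W : V → V → ℝ)
    (hWs : ∀ i j, W i j = W j i) (S : Finset V)
    (hS : ∀ i ∈ S, ∀ j ∈ S, ¬ G.Adj i j) :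
    C (alphaW G w) - pGW G w W
    = ∑ I ∈ (Finset.univ \ S).powerset,
        (C (mAux G w W S I) * handTerm (Finset.univ \ S) I
          + ∑ j ∈ S,
            (C (max (aAux G w W I j) 0) * handTerm (insert j (Finset.univ \ S)) (insert j I)
              + C (max (-(aAux G w W I j)) 0) * handTerm (insert j (Finset.univ \ S)) I)) := by
  classical
  apply MvPolynomial.funext
  intro x
  have hhand : ∀ T' I' : Finset V, eval x (handTerm T' I')
      = (∏ i ∈ I', x i) * ∏ j ∈ T' \ I', (1 - x j) := by
    intro T' I'
    unfold handTerm
    rw [map_mul]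
    congr 1
    · rw [map_prod]
      exact Finset.prod_congr rfl fun i _ => eval_X _
    · rw [map_prod]
      exact Finset.prod_congr rfl fun j _ => by rw [map_sub, map_one, eval_X]
  have hL : eval x (C (alphaW G w) - pGW G w W)
      = alphaW G w - ((∑ i, w i * x i) - 2⁻¹ * ∑ a, ∑ b, eAux G W a b * (x a * x b)) := by
    rw [map_sub, eval_C]
    congr 1
    unfold pGW
    rw [map_sub, map_mul, eval_C, map_sum]
    congr 1
    · exact Finset.sum_congr rfl fun i _ => by rw [map_mul, eval_C, eval_X]
    · congr 1
      rw [map_sum]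
      rw [show (∑ q ∈ Finset.univ.filter (fun q : V × V => G.Adj q.1 q.2),
            eval x (C (W q.1 q.2) * (X q.1 * X q.2)))
          = ∑ q ∈ Finset.univ.filter (fun q : V × V => G.Adj q.1 q.2),
              W q.1 q.2 * (x q.1 * x q.2) from
        Finset.sum_congr rfl fun q _ => by rw [map_mul, eval_C, map_mul, eval_X, eval_X]]
      rw [Finset.sum_filter, Fintype.sum_prod_type]
      apply Finset.sum_congr rfl
      intro a _
      apply Finset.sum_congr rfl
      intro b _
      unfold eAux
      by_cases h : G.Adj a b
      · rw [if_pos h, if_pos h]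
      · rw [if_neg h, if_neg h, zero_mul]
  rw [hL, master_identity G w W hWs S hS (alphaW G w) x, map_sum]
  apply Finset.sum_congr rfl
  intro I hI
  rw [Finset.mem_powerset] at hI
  rw [map_add, map_mul, eval_C, hhand, map_sum]
  have hjT : ∀ j ∈ S, j ∉ Finset.univ \ S := fun j hj => by simp [hj]
  have hterm : ∀ j ∈ S,
      eval x (C (max (aAux G w W I j) 0) * handTerm (insert j (Finset.univ \ S)) (insert j I)
        + C (max (-(aAux G w W I j)) 0) * handTerm (insert j (Finset.univ \ S)) I)
      = ((∏ i ∈ I, x i) * ∏ j' ∈ (Finset.univ \ S) \ I, (1 - x j'))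
          * (aAux G w W I j * x j + max (-(aAux G w W I j)) 0) := by
    intro j hj
    have hjI : j ∉ I := fun h => hjT j hj (hI h)
    have hjTI : j ∉ (Finset.univ \ S) \ I := fun h => hjT j hj (Finset.mem_sdiff.1 h).1
    have hd1 : insert j (Finset.univ \ S) \ insert j I = (Finset.univ \ S) \ I := by
      rw [Finset.insert_sdiff_insert, Finset.sdiff_insert_of_notMem (hjT j hj)]
    have hd2 : insert j (Finset.univ \ S) \ I = insert j ((Finset.univ \ S) \ I) :=
      Finset.insert_sdiff_of_notMem _ hjI
    rw [map_add, map_mul, map_mul, eval_C, eval_C, hhand, hhand, hd1, hd2,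
        Finset.prod_insert hjI, Finset.prod_insert hjTI]
    have hpm : max (aAux G w W I j) 0 = aAux G w W I j + max (-(aAux G w W I j)) 0 := by
      rcases le_total (aAux G w W I j) 0 with h | h
      · rw [max_eq_right h, max_eq_left (by linarith)]
        ring
      · rw [max_eq_left h, max_eq_right (by linarith)]
        ring
    rw [hpm]
    ring
  rw [Finset.sum_congr rfl hterm, ← Finset.mul_sum]
  unfold mAux aAux
  rw [Finset.sum_add_distrib]
  ring

end Lems

set_option maxHeartbeats 1000000 in
/-- For node weights `w ≥ 0` and edge weights `w_{ij} ≥ max(w_i,w_j)`,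
the Handelman rank satisfies `rk_H(G,w) ≤ |V(G)| − α(G) + 1`, i.e. the polynomial
`f_{G,w} = α(G,w) − p_{G,w}` belongs to `H_{|V(G)| − α(G) + 1}`. -/
theorem handelman_rank_upper_bound {V : Type*} [Fintype V] [DecidableEq V]
    (G : SimpleGraph V) (w : V → ℝ) (W : V → V → ℝ) (hw : ∀ v, 0 ≤ w v)
    (hWs : ∀ i j, W i j = W j i)
    (hW : ∀ i j, G.Adj i j → max (w i) (w j) ≤ W i j) :
    InHandelman (Fintype.card V - alphaNat G + 1) (C (alphaW G w) - pGW G w W) := by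
  classical
  obtain ⟨S, hS, hαS⟩ := alphaNat_exists G
  have hcardT : (Finset.univ \ S).card = Fintype.card V - alphaNat G := by
    rw [Finset.card_sdiff, Finset.inter_univ, Finset.card_univ, hαS]
  rw [cert_identity G w W hWs S hS]
  apply inHandelman_sum
  intro I hI
  rw [Finset.mem_powerset] at hI
  apply inHandelman_add
  · exact inHandelman_single hI (by omega) (m_nonneg G w W hw hWs hW S hS I hI)
  · apply inHandelman_sum
    intro j hj
    have hjT : j ∉ Finset.univ \ S := by simp [hj]
    have hcardins : (insert j (Finset.univ \ S)).card = (Finset.univ \ S).card + 1 :=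
      Finset.card_insert_of_notMem hjT
    apply inHandelman_add
    · exact inHandelman_single (Finset.insert_subset_insert j hI) (by omega) (le_max_right _ _)
    · exact inHandelman_single (hI.trans (Finset.subset_insert j _)) (by omega) (le_max_right _ _)
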